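/- Consider the two-dimensional retarded system ż₁(t) = z₂(t), ż₂(t) = z₂(t−1) + u(t), i.e. ż(t) = A₁ z(t−1) + A₀ z(t) + b u(t) with A₁ = [[0,0],[0,1]], A₀ = [[0,1],[0,0]], b = (0,1)ᵀ. Then: (i) for all row vectors p₋₁, p₁ ∈ ℝ^{1×2}, det((A₁ + b p₁) + λ·(b p₋₁)) = 0 for every λ ∈ ℂ (the closed-loop pencil is identically singular, so the system is not completable); yet (ii) there exists T > 0 such that for every y ∈ ℝ² and z₀ ∈ L²((−1,0); ℝ²) there exist u ∈ L²(0,T) and a solution z of the system with initial data (y, z₀) satisfying z(t) = 0 for all t ∈ [T−1, T]. -/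

import Mathlib

open MeasureTheory Set Matrix

noncomputable section

abbrev R2 := EuclideanSpace ℝ (Fin 2)

/-- `A₁ = [[0,0],[0,1]]` -/
def A1 : Matrix (Fin 2) (Fin 2) ℝ := !![0, 0; 0, 1]

/-- `A₀ = [[0,1],[0,0]]` -/
def A0 : Matrix (Fin 2) (Fin 2) ℝ := !![0, 1; 0, 0]

/-- `b = (0,1)ᵀ` -/
def bv : Fin 2 → ℝ := ![0, 1]

/-- the right-hand side `A₁ z(t-1) + A₀ z(t) + b u(t)` -/
def rhs (u : ℝ → ℝ) (z : ℝ → R2) (t : ℝ) : R2 :=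
  WithLp.toLp 2 (fun i => (A1 *ᵥ (fun j => z (t - 1) j)) i + (A0 *ᵥ (fun j => z t j)) i + u t * bv i)

/-- `z` is a solution on `[0,T]` of `ż(t) = A₁ z(t-1) + A₀ z(t) + b u(t)` with initial data
`(y, z₀)`; absolute continuity and the a.e. differential equation are expressed in integral
form. -/
def IsSolution (T : ℝ) (y : R2) (z0 : ℝ → R2) (u : ℝ → ℝ) (z : ℝ → R2) : Prop :=
  (∀ᵐ t ∂(volume.restrict (Ioo (-1:ℝ) 0)), z t = z0 t) ∧
  IntervalIntegrable (rhs u z) volume 0 T ∧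
  ∀ t ∈ Icc (0:ℝ) T, z t = y + ∫ s in (0:ℝ)..t, rhs u z s

/-- the rank-one matrix `b ⬝ p` -/
def outer (b p : Fin 2 → ℝ) : Matrix (Fin 2) (Fin 2) ℝ :=
  Matrix.of (fun i j => b i * p j)

/-- view a real matrix as a complex one -/
def cM (A : Matrix (Fin 2) (Fin 2) ℝ) : Matrix (Fin 2) (Fin 2) ℂ :=
  A.map (fun r => (r : ℂ))

def pc (α β : ℝ) : ℝ := -(3/2)*(α+β)
def pd (α β : ℝ) : ℝ := α + (3/4)*β
def pe (α β : ℝ) : ℝ := -(3*α+2*β)/16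
def P0 (α β t : ℝ) : ℝ := α + β*t + pc α β*t^2 + pd α β*t^3 + pe α β*t^4
def P1 (α β t : ℝ) : ℝ := β + 2*pc α β*t + 3*pd α β*t^2 + 4*pe α β*t^3
def P2 (α β t : ℝ) : ℝ := 2*pc α β + 6*pd α β*t + 12*pe α β*t^2

theorem P0_zero (α β : ℝ) : P0 α β 0 = α := by simp [P0]
theorem P1_zero (α β : ℝ) : P1 α β 0 = β := by simp [P1]
theorem P0_two (α β : ℝ) : P0 α β 2 = 0 := by unfold P0 pc pd pe; ring
theorem P1_two (α β : ℝ) : P1 α β 2 = 0 := by unfold P1 pc pd pe; ring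
theorem P2_two (α β : ℝ) : P2 α β 2 = 0 := by unfold P2 pc pd pe; ring

theorem P0_deriv (α β t : ℝ) : HasDerivAt (P0 α β) (P1 α β t) t := by
  have h : HasDerivAt (fun x : ℝ => α + β*x + pc α β*x^2 + pd α β*x^3 + pe α β*x^4)
      (0 + β*1 + pc α β*(2*t^1) + pd α β*(3*t^2) + pe α β*(4*t^3)) t :=
    ((((hasDerivAt_const t α).add ((hasDerivAt_id t).const_mul β)).add
      ((hasDerivAt_pow 2 t).const_mul (pc α β))).add
      ((hasDerivAt_pow 3 t).const_mul (pd α β))).add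
      ((hasDerivAt_pow 4 t).const_mul (pe α β))
  convert h using 1
  · rfl
  · unfold P1; ring

theorem P1_deriv (α β t : ℝ) : HasDerivAt (P1 α β) (P2 α β t) t := by
  have h : HasDerivAt (fun x : ℝ => β + 2*pc α β*x + 3*pd α β*x^2 + 4*pe α β*x^3)
      (0 + 2*pc α β*1 + 3*pd α β*(2*t^1) + 4*pe α β*(3*t^2)) t :=
    (((hasDerivAt_const t β).add ((hasDerivAt_id t).const_mul (2*pc α β))).add
      ((hasDerivAt_pow 2 t).const_mul (3*pd α β))).add
      ((hasDerivAt_pow 3 t).const_mul (4*pe α β))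
  convert h using 1
  · rfl
  · unfold P2; ring

theorem P1_cont (α β : ℝ) : Continuous (P1 α β) := by unfold P1; fun_prop
theorem P2_cont (α β : ℝ) : Continuous (P2 α β) := by unfold P2; fun_prop

theorem minDeriv {q q' : ℝ → ℝ} (hd : ∀ x, HasDerivAt q (q' x) x) (h2 : q' 2 = 0) (t : ℝ) :
    HasDerivAt (fun s => q (min s 2)) (q' (min t 2)) t := by
  rcases lt_trichotomy t 2 with h | h | h
  · rw [min_eq_left h.le]
    apply (hd t).congr_of_eventuallyEq
    filter_upwards [Iio_mem_nhds h] with x hx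
    rw [min_eq_left (le_of_lt hx)]
  · subst h
    rw [min_self, h2]
    rw [hasDerivAt_iff_isLittleO]
    have h1 := (hasDerivAt_iff_isLittleO.1 (hd 2))
    rw [h2] at h1
    simp only [smul_zero, sub_zero] at h1 ⊢
    have hmin : Filter.Tendsto (fun x : ℝ => min x 2) (nhds 2) (nhds 2) := by
      have : Continuous fun x : ℝ => min x 2 := continuous_id.min continuous_const
      simpa using this.tendsto 2
    have hcomp := h1.comp_tendsto hmin
    simp only [Function.comp_def, min_self] at hcomp
    have hO : (fun x : ℝ => min x 2 - 2) =O[nhds 2] (fun x : ℝ => x - 2) := by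
      refine Asymptotics.isBigO_of_le _ fun x => ?_
      simp only [Real.norm_eq_abs]
      rcases le_total x 2 with hx | hx
      · rw [min_eq_left hx]
      · rw [min_eq_right hx]; simp [abs_nonneg]
    simpa using hcomp.trans_isBigO hO
  · rw [min_eq_right h.le, h2]
    apply (hasDerivAt_const t (q 2)).congr_of_eventuallyEq
    filter_upwards [Ioi_mem_nhds h] with x hx
    rw [min_eq_right hx.le]


theorem stmt13 :
    -- (i) the closed-loop pencil `(A₁ + b p₁) + λ (b p₋₁)` is singular for every feedback:
    (∀ (pm1 p1 : Fin 2 → ℝ) (lam : ℂ),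
      (cM (A1 + outer bv p1) + lam • cM (outer bv pm1)).det = 0) ∧
    -- (ii) yet the system is exactly null controllable at some time `T > 0`:
    (∃ T : ℝ, 0 < T ∧
      ∀ (y : R2) (z0 : ℝ → R2), MemLp z0 2 (volume.restrict (Ioo (-1:ℝ) 0)) →
        ∃ (u : ℝ → ℝ) (z : ℝ → R2),
          MemLp u 2 (volume.restrict (Ioo (0:ℝ) T)) ∧
          IsSolution T y z0 u z ∧
          ∀ t ∈ Icc (T - 1) T, z t = 0) := by
  constructor
  · intro pm1 p1 lam
    rw [Matrix.det_fin_two]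
    simp [cM, A1, outer, bv, Matrix.add_apply, Matrix.map_apply, Matrix.smul_apply,
      Matrix.vecHead, Matrix.vecTail]
  ·
    classical
    refine ⟨3, by norm_num, ?_⟩
    intro y z0 hz0
    set α := y 0 with hα
    set β := y 1 with hβ
    let Φ : ℝ → R2 := fun t => WithLp.toLp 2 (fun i : Fin 2 => if i = 0 then P0 α β (min t 2) else P1 α β (min t 2))
    let Ψ : ℝ → R2 := fun t => WithLp.toLp 2 (fun i : Fin 2 => if i = 0 then P1 α β (min t 2) else P2 α β (min t 2))
    let z : ℝ → R2 := fun t => if t < 0 then z0 t else Φ t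
    let u : ℝ → ℝ := fun t => P2 α β (min t 2) - z (t-1) 1
    have hmin2 : Continuous fun t : ℝ => min t 2 := continuous_id.min continuous_const
    have hrhs : ∀ t : ℝ, 0 ≤ t → rhs u z t = Ψ t := by
      intro t ht
      ext i
      fin_cases i <;>
        simp [rhs, A1, A0, bv, Matrix.mulVec, dotProduct, Fin.sum_univ_two,
          Ψ, z, Φ, u, not_lt.mpr ht]
    have hΦd : ∀ t, HasDerivAt Φ (Ψ t) t := by
      intro t
      have h0 : HasDerivAt (fun s => P0 α β (min s 2)) (P1 α β (min t 2)) t :=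
        minDeriv (P0_deriv α β) (P1_two α β) t
      have h1 : HasDerivAt (fun s => P1 α β (min s 2)) (P2 α β (min t 2)) t :=
        minDeriv (P1_deriv α β) (P2_two α β) t
      have hpi : HasDerivAt
          (fun s => (fun i : Fin 2 => if i = 0 then P0 α β (min s 2) else P1 α β (min s 2)))
          (fun i : Fin 2 => if i = 0 then P1 α β (min t 2) else P2 α β (min t 2)) t := by
        rw [hasDerivAt_pi]
        intro i
        fin_cases i
        · simpa using h0
        · simpa using h1
      exact HasFDerivAt.comp_hasDerivAt t
        ((PiLp.continuousLinearEquiv 2 ℝ (fun _ : Fin 2 => ℝ)).symm.toContinuousLinearMap.hasFDerivAt) hpi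
    have hΨc : Continuous Ψ := by
      have hp : Continuous
          (fun t : ℝ => (fun i : Fin 2 => if i = 0 then P1 α β (min t 2) else P2 α β (min t 2))) := by
        apply continuous_pi
        intro i
        fin_cases i
        · simpa [Function.comp_def] using (P1_cont α β).comp hmin2
        · simpa [Function.comp_def] using (P2_cont α β).comp hmin2
      exact ((PiLp.continuousLinearEquiv 2 ℝ (fun _ : Fin 2 => ℝ)).symm.continuous).comp hp
    have hFTC : ∀ t : ℝ, (∫ s in (0:ℝ)..t, Ψ s) = Φ t - Φ 0 := fun t =>
      intervalIntegral.integral_eq_sub_of_hasDerivAt (fun s _ => hΦd s) (hΨc.intervalIntegrable 0 t)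
    have hΦ0 : Φ 0 = y := by
      have hm : min (0:ℝ) 2 = 0 := by norm_num
      ext i
      fin_cases i <;> simp [Φ, hm, P0_zero, P1_zero, hα, hβ]
    refine ⟨u, z, ?_, ⟨?_, ?_, ?_⟩, ?_⟩
    · -- MemLp u
      haveI : IsFiniteMeasure (volume.restrict (Ioo (0:ℝ) 3)) := by
        constructor
        rw [Measure.restrict_apply_univ, Real.volume_Ioo]
        exact ENNReal.ofReal_lt_top
      have hueq : u = fun t => P2 α β (min t 2) -
          ((Iio (1:ℝ)).indicator (fun t => z0 (t-1) 1) t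
            + (Ici (1:ℝ)).indicator (fun t => P1 α β (min (t-1) 2)) t) := by
        funext t
        show P2 α β (min t 2) - z (t-1) 1 = _
        by_cases h : t < 1
        · have h0 : t - 1 < 0 := by linarith
          rw [Set.indicator_of_mem (show t ∈ Iio 1 from h),
            Set.indicator_of_notMem (show t ∉ Ici 1 by simpa using h)]
          show P2 α β (min t 2) - (if t - 1 < 0 then z0 (t-1) else Φ (t-1)) 1 = _
          rw [if_pos h0]
          ring
        · have h0 : ¬ (t - 1 < 0) := by push_neg at h ⊢; linarith
          rw [Set.indicator_of_notMem (show t ∉ Iio 1 from h),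
            Set.indicator_of_mem (show t ∈ Ici 1 by simpa using not_lt.mp h)]
          show P2 α β (min t 2) - (if t - 1 < 0 then z0 (t-1) else Φ (t-1)) 1 = _
          rw [if_neg h0]
          show P2 α β (min t 2) - (if (1 : Fin 2) = 0 then P0 α β (min (t-1) 2) else P1 α β (min (t-1) 2)) = _
          norm_num
      rw [hueq]
      apply MemLp.sub
      · obtain ⟨C, hC⟩ := (isCompact_Icc (a := (0:ℝ)) (b := 3)).exists_bound_of_continuousOn
          ((P2_cont α β).comp hmin2).continuousOn
        exact MemLp.of_bound ((P2_cont α β).comp hmin2).aestronglyMeasurable C <|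
          (ae_restrict_mem measurableSet_Ioo).mono fun t ht => hC t ⟨ht.1.le, ht.2.le⟩
      · apply MemLp.add
        · rw [memLp_indicator_iff_restrict measurableSet_Iio,
            Measure.restrict_restrict measurableSet_Iio]
          have hset : Iio (1:ℝ) ∩ Ioo 0 3 = Ioo 0 1 := by
            ext x
            simp only [mem_inter_iff, mem_Iio, mem_Ioo]
            constructor
            · rintro ⟨h1, h2, h3⟩; exact ⟨h2, h1⟩
            · rintro ⟨h1, h2⟩; exact ⟨h2, h1, by linarith⟩
          rw [hset]
          have hz01 : MemLp (fun s => z0 s 1) 2 (volume.restrict (Ioo (-1:ℝ) 0)) := by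
            have := (EuclideanSpace.proj (1 : Fin 2) : R2 →L[ℝ] ℝ).comp_memLp' hz0
            simpa [Function.comp_def] using this
          have hmp : MeasurePreserving (fun t : ℝ => t - 1)
              (volume.restrict (Ioo (0:ℝ) 1)) (volume.restrict (Ioo (-1:ℝ) 0)) := by
            have h := (measurePreserving_sub_right volume (1:ℝ)).restrict_preimage
              (measurableSet_Ioo (a := (-1:ℝ)) (b := 0))
            have hpre : (fun t : ℝ => t - 1) ⁻¹' Ioo (-1) 0 = Ioo 0 1 := by
              ext x
              simp only [mem_preimage, mem_Ioo]
              constructor <;> rintro ⟨a, b⟩ <;> constructor <;> linarith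
            simp only [hpre] at h
            exact h
          exact hz01.comp_measurePreserving hmp
        · apply MemLp.indicator measurableSet_Ici
          have hcont : Continuous fun t : ℝ => P1 α β (min (t-1) 2) :=
            (P1_cont α β).comp (hmin2.comp (continuous_sub_right 1))
          obtain ⟨C, hC⟩ := (isCompact_Icc (a := (0:ℝ)) (b := 3)).exists_bound_of_continuousOn hcont.continuousOn
          exact MemLp.of_bound hcont.aestronglyMeasurable C <|
            (ae_restrict_mem measurableSet_Ioo).mono fun t ht => hC t ⟨ht.1.le, ht.2.le⟩
    · -- ae on (-1,0)
      refine (ae_restrict_mem measurableSet_Ioo).mono fun t ht => ?_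
      show (if t < 0 then z0 t else Φ t) = z0 t
      rw [if_pos ht.2]
    · -- IntervalIntegrable
      rw [intervalIntegrable_iff_integrableOn_Ioc_of_le (by norm_num : (0:ℝ) ≤ 3)]
      have hint : IntegrableOn Ψ (Ioc 0 3) volume := by
        rw [← intervalIntegrable_iff_integrableOn_Ioc_of_le (by norm_num : (0:ℝ) ≤ 3)]
        exact hΨc.intervalIntegrable 0 3
      exact hint.congr_fun (fun s hs => (hrhs s hs.1.le).symm) measurableSet_Ioc
    · -- integral equation
      intro t ht
      have h2 : (∫ s in (0:ℝ)..t, rhs u z s) = ∫ s in (0:ℝ)..t, Ψ s := by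
        apply intervalIntegral.integral_congr
        intro s hs
        rw [uIcc_of_le ht.1] at hs
        exact hrhs s hs.1
      show (if t < 0 then z0 t else Φ t) = _
      rw [if_neg (not_lt.mpr ht.1), h2, hFTC t, hΦ0]
      abel
    · -- vanishing on [2,3]
      intro t ht
      have h2t : (2:ℝ) ≤ t := by
        have := ht.1; norm_num at this; linarith
      show (if t < 0 then z0 t else Φ t) = 0
      rw [if_neg (by push_neg; linarith)]
      have hm : min t 2 = 2 := min_eq_right h2t
      ext i
      fin_cases i <;> simp [Φ, hm, P0_two, P1_two]
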